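/- Let T be an additive category with automorphism Σ carrying a Puppe triangulated structure, and let ⟨−,−,−⟩ be the associated Toda bracket. Then for composable morphisms f : X → Y, g : Y → Z, h : Z → T, i : T → U with the relevant consecutive composites zero, the following hold whenever both sides are defined: ⟨i,h,g⟩·f ⊆ ⟨i,h,g·f⟩; ⟨i,h·g,f⟩ ⊇ ⟨i·h,g,f⟩; ⟨i,h,g·f⟩ ⊆ ⟨i,h·g,f⟩; and ⟨i·h,g,f⟩ ⊇ (Σ⁻¹i)·⟨h,g,f⟩. -/

import Mathlib

open CategoryTheory CategoryTheory.Pretriangulated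

variable {T : Type*} [Category T] [Preadditive T] [Limits.HasZeroObject T]
  [HasShift T ℤ] [∀ n : ℤ, (CategoryTheory.shiftFunctor T n).Additive]
  [Pretriangulated T]

/-- The Toda bracket `⟨h, g, f⟩ ⊆ T(ΣX, W)` of three composable morphisms in a triangulated
category: complete `f` to an exact triangle `X → Y → C → ΣX`, extend `g` over the cone `C`
and factor the resulting composite with `h` through `q : C → ΣX`. -/
def todaBracket {X Y Z W : T} (f : X ⟶ Y) (g : Y ⟶ Z) (h : Z ⟶ W) :
    Set (X⟦(1 : ℤ)⟧ ⟶ W) :=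
  { t | ∃ (C : T) (i : Y ⟶ C) (q : C ⟶ X⟦(1 : ℤ)⟧)
      (_ : Triangle.mk f i q ∈ distTriang T) (g' : C ⟶ Z),
        i ≫ g' = g ∧ q ≫ t = g' ≫ h }

/-- The Toda bracket associated to a (Puppe) triangulated structure satisfies the four
juggling axioms of Heller: for composable `f : X → Y`, `g : Y → Z`, `h : Z → W`,
`e : W → U` with consecutive composites zero (so that all brackets below are defined),
`⟨e,h,g⟩·f ⊆ ⟨e,h,g∘f⟩`, `⟨e∘h,g,f⟩ ⊆ ⟨e,h∘g,f⟩`, `⟨e,h,g∘f⟩ ⊆ ⟨e,h∘g,f⟩` and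
`(Σ⁻¹e)·⟨h,g,f⟩ ⊆ ⟨e∘h,g,f⟩` (stated in the suspended convention, where brackets of maps
starting at `X` live in `T(ΣX, −)`). -/
theorem stmt17 {X Y Z W U : T}
    (f : X ⟶ Y) (g : Y ⟶ Z) (h : Z ⟶ W) (e : W ⟶ U)
    (hgf : f ≫ g = 0) (hhg : g ≫ h = 0) (heh : h ≫ e = 0) :
    ((fun t => f⟦(1 : ℤ)⟧' ≫ t) '' todaBracket g h e ⊆ todaBracket (f ≫ g) h e) ∧
    (todaBracket f g (h ≫ e) ⊆ todaBracket f (g ≫ h) e) ∧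
    (todaBracket (f ≫ g) h e ⊆ todaBracket f (g ≫ h) e) ∧
    ((fun t => t ≫ e) '' todaBracket f g h ⊆ todaBracket f g (h ≫ e)) := by
  refine ⟨?_, ?_, ?_, ?_⟩
  · rintro s ⟨t, ⟨C, i, q, hdist, h', hih, hqt⟩, rfl⟩
    obtain ⟨C', i', q', hdist'⟩ := distinguished_cocone_triangle (f ≫ g)
    obtain ⟨c, hc1, hc2⟩ := complete_distinguished_triangle_morphism
      (Triangle.mk (f ≫ g) i' q') (Triangle.mk g i q) hdist' hdist f (𝟙 Z)
      (Category.comp_id _)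
    change C' ⟶ C at c
    change i' ≫ (c : C' ⟶ C) = 𝟙 Z ≫ i at hc1
    change q' ≫ f⟦(1 : ℤ)⟧' = (c : C' ⟶ C) ≫ q at hc2
    refine ⟨C', i', q', hdist', c ≫ h', ?_, ?_⟩
    · rw [← Category.assoc, hc1]; simpa using hih
    · rw [← Category.assoc, hc2, Category.assoc, hqt, Category.assoc]
  · rintro t ⟨C, i, q, hdist, g', hig, hqt⟩
    exact ⟨C, i, q, hdist, g' ≫ h, by rw [← Category.assoc, hig],
      by rw [hqt, Category.assoc]⟩
  · rintro t ⟨C, i, q, hdist, h', hih, hqt⟩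
    obtain ⟨C', i', q', hdist'⟩ := distinguished_cocone_triangle f
    obtain ⟨c, hc1, hc2⟩ := complete_distinguished_triangle_morphism
      (Triangle.mk f i' q') (Triangle.mk (f ≫ g) i q) hdist' hdist (𝟙 X) g
      (Category.id_comp _).symm
    change C' ⟶ C at c
    change i' ≫ (c : C' ⟶ C) = g ≫ i at hc1
    change q' ≫ (𝟙 X)⟦(1 : ℤ)⟧' = (c : C' ⟶ C) ≫ q at hc2
    simp only [CategoryTheory.Functor.map_id, Category.comp_id] at hc2
    refine ⟨C', i', q', hdist', c ≫ h', ?_, ?_⟩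
    · rw [← Category.assoc, hc1, Category.assoc, hih]
    · rw [hc2, Category.assoc, hqt, Category.assoc]
  · rintro s ⟨t, ⟨C, i, q, hdist, g', hig, hqt⟩, rfl⟩
    exact ⟨C, i, q, hdist, g', hig,
      by rw [← Category.assoc, hqt, Category.assoc]⟩
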